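/- Let u₀(x) = 2i η e^{i(2ξx + φ)} sech(x₀ - 2ηx) with η ≠ 0, and set a = η + iξ, Γ_ℓ = 2iη e^{x₀ - iφ}, v₀ = u₀* (focusing case, so v₀(x) = -2i η e^{-i(2ξx+φ)} sech(x₀ - 2ηx)). Then the pair Kᵘᵖ(x,y) = Γ_ℓ* e^{-a*(x+y)} / (1 + e^{2(x₀ - 2ηx)}), Kᵈⁿ(x,y) = -(|Γ_ℓ|²/(2η)) e^{-a*(x+y) - 2ax} / (1 + e^{2(x₀ - 2ηx)}) satisfies the Volterra system Kᵘᵖ(x,y) + ∫_x^{(x+y)/2} u₀(z) Kᵈⁿ(z, x+y-z) dz = -(1/2) u₀((x+y)/2) and Kᵈⁿ(x,y) - ∫_x^∞ v₀(z) Kᵘᵖ(z, z+y-x) dz = 0 for all y ≥ x. -/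

import Mathlib

open MeasureTheory Complex

private lemma volterra_expPow (p : ℂ) (n : ℕ) :
    Complex.exp p ^ n = Complex.exp (n * p) := (Complex.exp_nat_mul p n).symm

private lemma volterra_expMul (c p q : ℂ) :
    c * Complex.exp p * Complex.exp q = c * Complex.exp (p + q) := by
  rw [mul_assoc, ← Complex.exp_add]

private lemma volterra_sech (t : ℝ) :
    ((2 / (Real.exp t + Real.exp (-t)) : ℝ) : ℂ)
      = 2 * Complex.exp (t : ℂ) * (1 + ((Real.exp (2 * t) : ℝ) : ℂ))⁻¹ := by
  have h1 : Real.exp t + Real.exp (-t) ≠ 0 := by positivity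
  have h2 : (1 : ℝ) + Real.exp (2 * t) ≠ 0 := by positivity
  rw [show ((2 / (Real.exp t + Real.exp (-t)) : ℝ) : ℂ)
      = ((2 * Real.exp t / (1 + Real.exp (2 * t)) : ℝ) : ℂ) from by
    norm_cast
    rw [div_eq_div_iff h1 h2, show (2:ℝ) * t = t + t from by ring, Real.exp_add, Real.exp_neg]
    field_simp
    ring]
  push_cast [Complex.ofReal_exp]
  ring

set_option maxHeartbeats 2000000 in
theorem one_soliton_solves_volterra (ξ φ x₀ η : ℝ) (hη : 0 < η)
    (a Γ : ℂ) (ha : a = (η : ℂ) + Complex.I * (ξ : ℂ))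
    (hΓ : Γ = 2 * Complex.I * (η : ℂ) * Complex.exp ((x₀ : ℂ) - Complex.I * (φ : ℂ)))
    (u v : ℝ → ℂ)
    (hu : ∀ x : ℝ, u x = 2 * Complex.I * (η : ℂ) *
      Complex.exp (Complex.I * ((2 * ξ * x + φ : ℝ) : ℂ)) *
      ((2 / (Real.exp (x₀ - 2 * η * x) + Real.exp (-(x₀ - 2 * η * x))) : ℝ) : ℂ))
    (hv : ∀ x : ℝ, v x = (starRingEnd ℂ) (u x))
    (Kup Kdn : ℝ → ℝ → ℂ)
    (hKup : ∀ x y : ℝ, Kup x y =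
      (starRingEnd ℂ) Γ * Complex.exp (-(starRingEnd ℂ) a * ((x + y : ℝ) : ℂ)) /
        (1 + ((Real.exp (2 * (x₀ - 2 * η * x)) : ℝ) : ℂ)))
    (hKdn : ∀ x y : ℝ, Kdn x y =
      -((‖Γ‖ ^ 2 / (2 * η) : ℝ) : ℂ) *
        Complex.exp (-(starRingEnd ℂ) a * ((x + y : ℝ) : ℂ) - 2 * a * (x : ℂ)) /
        (1 + ((Real.exp (2 * (x₀ - 2 * η * x)) : ℝ) : ℂ))) :
    ∀ x y : ℝ, x ≤ y →
      (Kup x y + (∫ z in x..((x + y) / 2), u z * Kdn z (x + y - z))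
          = -(1 / 2 : ℂ) * u ((x + y) / 2)) ∧
      (Kdn x y - (∫ z in Set.Ioi x, v z * Kup z (z + y - x)) = 0) := by
  intro x y hxy
  have hη' : (η : ℂ) ≠ 0 := by exact_mod_cast hη.ne'
  have hconj : (starRingEnd ℂ) a = (η : ℂ) - I * ξ := by
    rw [ha]; simp [map_add, map_mul, Complex.conj_ofReal, Complex.conj_I]; ring
  have hcΓ : (starRingEnd ℂ) Γ = -2 * I * (η : ℂ) * Complex.exp ((x₀ : ℂ) + I * φ) := by
    rw [hΓ]
    simp only [map_mul, Complex.conj_ofReal, Complex.conj_I, ← Complex.exp_conj, map_sub,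
      map_ofNat]
    ring
  have habs : ‖Γ‖ = 2 * η * Real.exp x₀ := by
    rw [hΓ]; simp [map_mul, Complex.norm_exp, Complex.norm_real, abs_of_pos hη]
  -- the real profile function and its derivative
  have hden : ∀ z : ℝ, (1 : ℝ) + Real.exp (2 * (x₀ - 2 * η * z)) ≠ 0 := fun z => by positivity
  have hDc : ∀ z : ℝ, (1 : ℂ) + Complex.exp (2 * ((x₀ : ℂ) - 2 * η * z)) ≠ 0 := by
    intro z
    rw [show (2 * ((x₀ : ℂ) - 2 * η * z)) = ((2 * (x₀ - 2 * η * z) : ℝ) : ℂ) from by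
        push_cast; ring, ← Complex.ofReal_exp,
      show (1 : ℂ) + ((Real.exp (2 * (x₀ - 2 * η * z)) : ℝ) : ℂ)
          = ((1 + Real.exp (2 * (x₀ - 2 * η * z)) : ℝ) : ℂ) from by push_cast; ring]
    exact_mod_cast hden z
  have hD0 : ∀ t : ℝ, (1 + ((Real.exp (2 * (x₀ - 2 * η * t)) : ℝ) : ℂ)) ≠ 0 := by
    intro t
    rw [show (1 : ℂ) + ((Real.exp (2 * (x₀ - 2 * η * t)) : ℝ) : ℂ)
        = ((1 + Real.exp (2 * (x₀ - 2 * η * t)) : ℝ) : ℂ) from by push_cast; ring]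
    exact_mod_cast hden t
  set r : ℝ → ℝ := fun z => (1 + Real.exp (2 * (x₀ - 2 * η * z)))⁻¹ with hrdef
  set r' : ℝ → ℝ := fun z => 4 * η * Real.exp (2 * (x₀ - 2 * η * z)) * (r z) ^ 2 with hr'def
  have hcast : ∀ t : ℝ, ((r t : ℝ) : ℂ)
      = (1 + ((Real.exp (2 * (x₀ - 2 * η * t)) : ℝ) : ℂ))⁻¹ := by
    intro t; rw [hrdef]; push_cast; ring
  have hrd : ∀ z : ℝ, HasDerivAt r (r' z) z := by
    intro z
    have h0 : HasDerivAt (fun z : ℝ => 2 * (x₀ - 2 * η * z)) (-(4 * η)) z := by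
      have h0' : HasDerivAt (fun z : ℝ => 2 * x₀ - 4 * η * z) (-(4 * η)) z := by
        simpa using ((hasDerivAt_id z).const_mul (4 * η)).const_sub (2 * x₀)
      refine h0'.congr_of_eventuallyEq (Filter.Eventually.of_forall fun t => by ring)
    have h1 := h0.exp
    have h2 := h1.const_add (1 : ℝ)
    have h3 := h2.inv (hden z)
    refine h3.congr_deriv ?_
    rw [hr'def, hrdef]
    field_simp
  have hrpos : ∀ z : ℝ, 0 < r z := fun z => by rw [hrdef]; positivity
  have hrle : ∀ z : ℝ, r z ≤ 1 := fun z => by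
    rw [hrdef]
    rw [inv_le_one_iff₀]
    right
    nlinarith [Real.exp_pos (2 * (x₀ - 2 * η * z))]
  have hcontr' : Continuous r' := by
    have hce : Continuous fun z : ℝ => Real.exp (2 * (x₀ - 2 * η * z)) := by
      apply Real.continuous_exp.comp; continuity
    have hcr : Continuous r := by
      rw [hrdef]
      exact (continuous_const.add hce).inv₀ hden
    rw [hr'def]
    exact (continuous_const.mul hce).mul (hcr.pow 2)
  constructor
  · -- first equation
    set C₁ : ℂ := -2 * I * (η : ℂ) *
      Complex.exp ((x₀ : ℂ) + I * φ - ((η : ℂ) - I * ξ) * ((x : ℂ) + y)) with hC₁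
    have hG : ∀ z : ℝ, HasDerivAt (fun z : ℝ => C₁ * ((r z : ℝ) : ℂ)) (C₁ * ((r' z : ℝ) : ℂ)) z :=
      fun z => ((hrd z).ofReal_comp).const_mul C₁
    have hiA : ∀ z : ℝ, u z * Kdn z (x + y - z) = C₁ * ((r' z : ℝ) : ℂ) := by
      intro z
      rw [hu, hKdn, hconj, ha, habs, volterra_sech (x₀ - 2 * η * z), hC₁, hr'def, hrdef]
      have h1 := hDc z
      push_cast
      field_simp
      ring_nf
      simp only [volterra_expPow, volterra_expMul, ← Complex.exp_add]
      ring_nf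
    have hB : Kup x y = C₁ * ((r x : ℝ) : ℂ) := by
      rw [hKup, hcΓ, hconj, hcast x, div_eq_iff (hD0 x), mul_assoc C₁,
        inv_mul_cancel₀ (hD0 x), mul_one, hC₁]
      simp only [volterra_expMul]
      push_cast
      ring_nf
    have hexpC : Complex.exp ((x₀ : ℂ) + I * φ - ((η : ℂ) - I * ξ) * ((x : ℂ) + y))
        = Complex.exp (I * ((2 * ξ * ((x + y) / 2) + φ : ℝ) : ℂ)) *
          Complex.exp ((x₀ - 2 * η * ((x + y) / 2) : ℝ) : ℂ) := by
      rw [← Complex.exp_add]; congr 1; push_cast; ring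
    have hC : -(1 / 2 : ℂ) * u ((x + y) / 2) = C₁ * ((r ((x + y) / 2) : ℝ) : ℂ) := by
      rw [hu, volterra_sech (x₀ - 2 * η * ((x + y) / 2)), hcast ((x + y) / 2), hC₁, hexpC]
      ring
    have hint : IntervalIntegrable (fun z : ℝ => C₁ * ((r' z : ℝ) : ℂ)) volume x ((x + y) / 2) :=
      (continuous_const.mul (Complex.continuous_ofReal.comp hcontr')).intervalIntegrable _ _
    have hFTC := intervalIntegral.integral_eq_sub_of_hasDerivAt
      (f := fun z : ℝ => C₁ * ((r z : ℝ) : ℂ)) (f' := fun z : ℝ => C₁ * ((r' z : ℝ) : ℂ))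
      (fun t _ => hG t) hint
    simp only [hiA]
    rw [hFTC, hB, hC]
    ring
  · -- second equation
    set C₂ : ℂ := -2 * (η : ℂ) *
      Complex.exp (-(((η : ℂ) - I * ξ)) * ((y : ℂ) - x)) with hC₂
    have hG : ∀ z : ℝ, HasDerivAt (fun z : ℝ => C₂ * ((r z : ℝ) : ℂ)) (C₂ * ((r' z : ℝ) : ℂ)) z :=
      fun z => ((hrd z).ofReal_comp).const_mul C₂
    have hiD : ∀ z : ℝ, v z * Kup z (z + y - x) = C₂ * ((r' z : ℝ) : ℂ) := by
      intro z
      rw [hv, hu, hKup, hcΓ, hconj]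
      simp only [map_mul, Complex.conj_ofReal, Complex.conj_I, map_ofNat, ← Complex.exp_conj]
      rw [volterra_sech (x₀ - 2 * η * z), hC₂, hr'def, hrdef]
      have h1 := hDc z
      push_cast
      field_simp
      ring_nf
      simp only [volterra_expPow, volterra_expMul, ← Complex.exp_add]
      ring_nf
      simp only [Complex.I_sq]
      ring
    have htend : Filter.Tendsto (fun z : ℝ => C₂ * ((r z : ℝ) : ℂ)) Filter.atTop (nhds C₂) := by
      have he : Filter.Tendsto (fun z : ℝ => Real.exp (2 * (x₀ - 2 * η * z)))
          Filter.atTop (nhds 0) := by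
        apply Real.tendsto_exp_atBot.comp
        have h1 : Filter.Tendsto (fun z : ℝ => -(4 * η) * z) Filter.atTop Filter.atBot :=
          Filter.Tendsto.const_mul_atTop_of_neg (by nlinarith) Filter.tendsto_id
        have h2 := Filter.tendsto_atBot_add_const_left Filter.atTop (2 * x₀) h1
        exact h2.congr fun z => by ring
      have hr1 : Filter.Tendsto r Filter.atTop (nhds 1) := by
        rw [hrdef]
        have h3 := ((he.const_add (1 : ℝ)).inv₀ (by norm_num))
        norm_num at h3
        exact h3
      have h4 := ((Complex.continuous_ofReal.tendsto 1).comp hr1).const_mul C₂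
      have h6 : Filter.Tendsto (fun z : ℝ => C₂ * ((r z : ℝ) : ℂ)) Filter.atTop
          (nhds (C₂ * ((1 : ℝ) : ℂ))) := h4.congr fun z => rfl
      rw [show C₂ * ((1 : ℝ) : ℂ) = C₂ from by norm_num] at h6
      exact h6
    have hintD : IntegrableOn (fun z : ℝ => C₂ * ((r' z : ℝ) : ℂ)) (Set.Ioi x) := by
      have hg : IntegrableOn
          (fun z : ℝ => ‖C₂‖ * (4 * η * Real.exp (2 * x₀)) * Real.exp (-(4 * η) * z))
          (Set.Ioi x) :=
        (exp_neg_integrableOn_Ioi x (by positivity : (0:ℝ) < 4 * η)).const_mul _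
      refine Integrable.mono' hg ?_ ?_
      · exact (continuous_const.mul (Complex.continuous_ofReal.comp hcontr')).aestronglyMeasurable
      · refine Filter.Eventually.of_forall fun z => ?_
        have h1 : ‖C₂ * ((r' z : ℝ) : ℂ)‖ = ‖C₂‖ * |r' z| := by
          rw [norm_mul, Complex.norm_real, Real.norm_eq_abs]
        rw [h1, _root_.abs_of_nonneg (by rw [hr'def]; positivity : (0:ℝ) ≤ r' z)]
        have h2 : r' z ≤ 4 * η * Real.exp (2 * x₀) * Real.exp (-(4 * η) * z) := by
          simp only [hr'def]
          have h3 : Real.exp (2 * (x₀ - 2 * η * z))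
              = Real.exp (2 * x₀) * Real.exp (-(4 * η) * z) := by
            rw [← Real.exp_add]; ring_nf
          rw [h3]
          have h4 : (r z) ^ 2 ≤ 1 := by
            have := hrle z; have := (hrpos z).le; nlinarith
          have h5 : (0:ℝ) ≤ 4 * η * (Real.exp (2 * x₀) * Real.exp (-(4 * η) * z)) := by positivity
          nlinarith [mul_le_mul_of_nonneg_left h4 h5]
        calc ‖C₂‖ * r' z ≤ ‖C₂‖ * (4 * η * Real.exp (2 * x₀) * Real.exp (-(4 * η) * z)) := by
              exact mul_le_mul_of_nonneg_left h2 (norm_nonneg _)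
          _ = ‖C₂‖ * (4 * η * Real.exp (2 * x₀)) * Real.exp (-(4 * η) * z) := by ring
    have hFTC := MeasureTheory.integral_Ioi_of_hasDerivAt_of_tendsto'
      (f := fun z : ℝ => C₂ * ((r z : ℝ) : ℂ)) (f' := fun z : ℝ => C₂ * ((r' z : ℝ) : ℂ))
      (fun z _ => hG z) hintD htend
    have hfact : (1 : ℂ) - (1 + ((Real.exp (2 * (x₀ - 2 * η * x)) : ℝ) : ℂ))⁻¹
        = ((Real.exp (2 * (x₀ - 2 * η * x)) : ℝ) : ℂ) *
          (1 + ((Real.exp (2 * (x₀ - 2 * η * x)) : ℝ) : ℂ))⁻¹ := by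
      push_cast
      field_simp [hDc x]
      ring
    have hnum : -(((2 * η * (Real.exp x₀ * Real.exp x₀) : ℝ)) : ℂ) *
        Complex.exp (-((η : ℂ) - I * ξ) * ((x + y : ℝ) : ℂ) - 2 * ((η : ℂ) + I * ξ) * (x : ℂ))
        = C₂ * ((Real.exp (2 * (x₀ - 2 * η * x)) : ℝ) : ℂ) := by
      rw [hC₂]
      push_cast
      ring_nf
      simp only [volterra_expPow, volterra_expMul, ← Complex.exp_add]
      ring_nf
    have hE : Kdn x y = C₂ - C₂ * ((r x : ℝ) : ℂ) := by
      rw [hKdn, hconj, ha, habs, hcast x,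
        show ((2 * η * Real.exp x₀) ^ 2 / (2 * η) : ℝ)
          = 2 * η * (Real.exp x₀ * Real.exp x₀) from by field_simp,
        div_eq_mul_inv, hnum, mul_assoc, ← hfact]
      ring
    simp only [hiD]
    rw [hFTC, hE]
    ring
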